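/- If ϱᵀb ≠ 0 (with ϱᵀ the first row of adj(I - A_L)), I - A_L is singular, and v₀ is a nonzero vector in the null space of I - A_L, then the first component e₁ᵀv₀ is nonzero; moreover the null space of I - A_L is one-dimensional. -/

import Mathlib

open Matrix

/-- If `ϱᵀb ≠ 0` (with `ϱᵀ` the first row of `adj(I - A_L)`), `I - A_L` is
singular, and `v₀` is a nonzero null vector of `I - A_L`, then the first
component of `v₀` is nonzero; moreover the null space of `I - A_L` is
one-dimensional (every null vector is a multiple of `v₀`). -/
theorem null_vector_first_component_ne_zero {N : ℕ}
    (AL : Matrix (Fin (N + 1)) (Fin (N + 1)) ℝ) (b : Fin (N + 1) → ℝ)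
    (hb : (1 - AL).adjugate 0 ⬝ᵥ b ≠ 0)
    (hsing : (1 - AL).det = 0)
    (v₀ : Fin (N + 1) → ℝ) (hv₀ : v₀ ≠ 0)
    (hnull : (1 - AL).mulVec v₀ = 0) :
    v₀ 0 ≠ 0 ∧ ∀ u : Fin (N + 1) → ℝ, (1 - AL).mulVec u = 0 →
      ∃ c : ℝ, u = c • v₀ := by
  have key : ∀ w : Fin (N + 1) → ℝ, (1 - AL).mulVec w = 0 → w 0 = 0 → w = 0 := by
    intro w hw hw0
    by_contra hne
    apply hb
    have hadj : ∀ j, (1 - AL).adjugate 0 j = 0 := by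
      intro j
      rw [Matrix.adjugate_apply, ← Matrix.exists_mulVec_eq_zero_iff]
      refine ⟨w, hne, ?_⟩
      funext i
      by_cases h : i = j
      · subst h
        simp [Matrix.mulVec, Matrix.updateRow_self, single_dotProduct, hw0]
      · simpa [Matrix.mulVec, Matrix.updateRow_ne h] using congrFun hw i
    have : (1 - AL).adjugate 0 = 0 := funext hadj
    simp [this]
  have hv00 : v₀ 0 ≠ 0 := by
    intro h
    exact hv₀ (key v₀ hnull h)
  refine ⟨hv00, fun u hu => ?_⟩
  refine ⟨u 0 / v₀ 0, ?_⟩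
  have hw : (1 - AL).mulVec (u - (u 0 / v₀ 0) • v₀) = 0 := by
    rw [Matrix.mulVec_sub, Matrix.mulVec_smul, hu, hnull, smul_zero, sub_zero]
  have hw0 : (u - (u 0 / v₀ 0) • v₀) 0 = 0 := by
    simp only [Pi.sub_apply, Pi.smul_apply, smul_eq_mul]
    field_simp
    ring
  have := key _ hw hw0
  rwa [sub_eq_zero] at this
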